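/- There exists a constant C > 0 such that for all k ∈ ℤ and all r, s, t ∈ (0,1/2) with t < r + s − 1/2, one has Σ_{l∈ℤ} (1+l²)^{−r} (1+(k−l)²)^{−s} ≤ C (1+k²)^{−t}, where C depends only on r, s, t. -/

import Mathlib

open Real

private lemma summable_weight {c : ℝ} (hc : 1 / 2 < c) :
    Summable (fun l : ℤ => ((1 : ℝ) + (l : ℝ) ^ 2) ^ (-c)) := by
  have h2c : 1 < 2 * c := by linarith
  have hite : Summable (fun l : ℤ => if l = 0 then (1 : ℝ) else 0) := by
    apply summable_of_ne_finset_zero (s := ({0} : Finset ℤ))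
    intro l hl
    simp only [Finset.mem_singleton] at hl
    simp [hl]
  have hg : Summable (fun l : ℤ => |(l : ℝ)| ^ (-(2 * c)) + if l = 0 then (1 : ℝ) else 0) :=
    (Real.summable_abs_int_rpow h2c).add hite
  refine Summable.of_nonneg_of_le
    (fun l => Real.rpow_nonneg (by positivity) _) (fun l => ?_) hg
  rcases eq_or_ne l 0 with rfl | hl
  · simp [Real.rpow_nonneg]
  · have hl0 : (0 : ℝ) < (l : ℝ) ^ 2 := by
      have : (l : ℝ) ≠ 0 := Int.cast_ne_zero.mpr hl
      positivity
    have h1 : ((l : ℝ) ^ 2) ≤ 1 + (l : ℝ) ^ 2 := by linarith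
    have h2 : ((1 : ℝ) + (l : ℝ) ^ 2) ^ (-c) ≤ ((l : ℝ) ^ 2) ^ (-c) :=
      Real.rpow_le_rpow_of_nonpos hl0 h1 (by linarith)
    have h3 : ((l : ℝ) ^ 2) ^ (-c) = |(l : ℝ)| ^ (-(2 * c)) := by
      rw [← sq_abs, ← Real.rpow_natCast |(l : ℝ)| 2, ← Real.rpow_mul (abs_nonneg _)]
      norm_num
    simp only [if_neg hl, add_zero]
    rw [← h3]; exact h2

private lemma tsum_shift (f : ℤ → ℝ) (k : ℤ) : ∑' l : ℤ, f (k - l) = ∑' l : ℤ, f l :=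
  (Equiv.subLeft k).tsum_eq f

private lemma summable_shift {f : ℤ → ℝ} (hf : Summable f) (k : ℤ) :
    Summable (fun l : ℤ => f (k - l)) :=
  ((Equiv.subLeft k).summable_iff (f := f)).mpr hf

private lemma conv_bound {α β : ℝ} (hα : 0 < α) (hα2 : α < 1 / 2) (hβ : 0 < β)
    (hβ2 : β < 1 / 2) (hsum : 1 / 2 < α + β) :
    ∃ B : ℝ, 0 < B ∧ ∀ k : ℤ,
      Summable (fun l : ℤ => ((1 : ℝ) + (l : ℝ) ^ 2) ^ (-α) *
        ((1 : ℝ) + ((k : ℝ) - (l : ℝ)) ^ 2) ^ (-β)) ∧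
      ∑' l : ℤ, ((1 : ℝ) + (l : ℝ) ^ 2) ^ (-α) *
        ((1 : ℝ) + ((k : ℝ) - (l : ℝ)) ^ 2) ^ (-β) ≤ B := by
  set d : ℝ := 1 / 2 + α - β with hd
  have hd0 : 0 < d := by simp only [hd]; linarith
  have hd1 : d < 1 := by simp only [hd]; linarith
  set p : ℝ := d⁻¹ with hp
  set q : ℝ := (1 - d)⁻¹ with hq
  have hpq : p.HolderConjugate q := by
    rw [Real.holderConjugate_iff]; constructor
    · exact (one_lt_inv₀ hd0).2 hd1
    · rw [hp, hq, inv_inv, inv_inv]; ring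
  have hpp : 0 < p := hpq.pos
  have hqq : 0 < q := hpq.symm.pos
  have hαp : 1 / 2 < α * p := by
    rw [hp, ← div_eq_mul_inv, lt_div_iff₀ hd0, hd]; nlinarith
  have hβq : 1 / 2 < β * q := by
    have h1d : 0 < 1 - d := by linarith
    rw [hq, ← div_eq_mul_inv, lt_div_iff₀ h1d, hd]; nlinarith
  have Sp := summable_weight hαp
  have Sq := summable_weight hβq
  refine ⟨(∑' l : ℤ, ((1 : ℝ) + (l : ℝ) ^ 2) ^ (-(α * p))) / p +
      (∑' l : ℤ, ((1 : ℝ) + (l : ℝ) ^ 2) ^ (-(β * q))) / q + 1, ?_, fun k => ?_⟩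
  · have h1 : 0 ≤ (∑' l : ℤ, ((1 : ℝ) + (l : ℝ) ^ 2) ^ (-(α * p))) / p := by
      apply div_nonneg _ hpp.le
      exact tsum_nonneg fun l => Real.rpow_nonneg (by positivity) _
    have h2 : 0 ≤ (∑' l : ℤ, ((1 : ℝ) + (l : ℝ) ^ 2) ^ (-(β * q))) / q := by
      apply div_nonneg _ hqq.le
      exact tsum_nonneg fun l => Real.rpow_nonneg (by positivity) _
    linarith
  · -- Young's inequality pointwise
    have hymaj : ∀ l : ℤ, ((1 : ℝ) + (l : ℝ) ^ 2) ^ (-α) *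
        ((1 : ℝ) + ((k : ℝ) - (l : ℝ)) ^ 2) ^ (-β) ≤
        ((1 : ℝ) + (l : ℝ) ^ 2) ^ (-(α * p)) / p +
        ((1 : ℝ) + ((k : ℝ) - (l : ℝ)) ^ 2) ^ (-(β * q)) / q := by
      intro l
      have ha : (0 : ℝ) ≤ ((1 : ℝ) + (l : ℝ) ^ 2) ^ (-α) := Real.rpow_nonneg (by positivity) _
      have hb : (0 : ℝ) ≤ ((1 : ℝ) + ((k : ℝ) - (l : ℝ)) ^ 2) ^ (-β) :=
        Real.rpow_nonneg (by positivity) _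
      have := Real.young_inequality_of_nonneg ha hb hpq
      rwa [← Real.rpow_natCast, ← Real.rpow_natCast, Real.rpow_natCast,
        Real.rpow_natCast, ← Real.rpow_mul (by positivity : (0:ℝ) ≤ 1 + (l:ℝ)^2),
        ← Real.rpow_mul (by positivity : (0:ℝ) ≤ 1 + ((k:ℝ)-(l:ℝ))^2),
        neg_mul, neg_mul] at this
    have hmajS : Summable (fun l : ℤ => ((1 : ℝ) + (l : ℝ) ^ 2) ^ (-(α * p)) / p +
        ((1 : ℝ) + ((k : ℝ) - (l : ℝ)) ^ 2) ^ (-(β * q)) / q) := by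
      apply Summable.add (Sp.div_const p)
      exact (summable_shift (f := fun m : ℤ => ((1 : ℝ) + (m : ℝ) ^ 2) ^ (-(β * q))) Sq k
        |>.congr (by intro l; push_cast; ring_nf)).div_const q
    have hfS : Summable (fun l : ℤ => ((1 : ℝ) + (l : ℝ) ^ 2) ^ (-α) *
        ((1 : ℝ) + ((k : ℝ) - (l : ℝ)) ^ 2) ^ (-β)) :=
      Summable.of_nonneg_of_le
        (fun l => mul_nonneg (Real.rpow_nonneg (by positivity) _)
          (Real.rpow_nonneg (by positivity) _)) hymaj hmajS
    refine ⟨hfS, ?_⟩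
    have h1 := Summable.tsum_le_tsum hymaj hfS hmajS
    have h2 : (∑' l : ℤ, (((1 : ℝ) + (l : ℝ) ^ 2) ^ (-(α * p)) / p +
        ((1 : ℝ) + ((k : ℝ) - (l : ℝ)) ^ 2) ^ (-(β * q)) / q)) =
        (∑' l : ℤ, ((1 : ℝ) + (l : ℝ) ^ 2) ^ (-(α * p))) / p +
        (∑' l : ℤ, ((1 : ℝ) + (l : ℝ) ^ 2) ^ (-(β * q))) / q := by
      have hshift : (∑' l : ℤ, ((1 : ℝ) + ((k : ℝ) - (l : ℝ)) ^ 2) ^ (-(β * q))) =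
          ∑' l : ℤ, ((1 : ℝ) + (l : ℝ) ^ 2) ^ (-(β * q)) := by
        rw [← tsum_shift (fun m : ℤ => ((1 : ℝ) + (m : ℝ) ^ 2) ^ (-(β * q))) k]
        apply tsum_congr
        intro l; push_cast; ring_nf
      have hq2sum : Summable (fun l : ℤ =>
          ((1 : ℝ) + ((k : ℝ) - (l : ℝ)) ^ 2) ^ (-(β * q)) / q) :=
        (summable_shift (f := fun m : ℤ => ((1 : ℝ) + (m : ℝ) ^ 2) ^ (-(β * q))) Sq k
          |>.congr (by intro l; push_cast; ring_nf)).div_const q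
      rw [Summable.tsum_add (Sp.div_const p) hq2sum, tsum_div_const, tsum_div_const, hshift]
    linarith [h1, h2.ge, h2.le]

/-- Convolution weight estimate: for `r, s, t ∈ (0,1/2)` with `t < r + s − 1/2`,
there exists `C = C(r,s,t) > 0` such that for all `k ∈ ℤ`,
`Σ_{l∈ℤ} (1+l²)^{−r}(1+(k−l)²)^{−s} ≤ C (1+k²)^{−t}`. -/
theorem convolution_weight_estimate (r s t : ℝ)
    (hr : r ∈ Set.Ioo (0 : ℝ) (1 / 2)) (hs : s ∈ Set.Ioo (0 : ℝ) (1 / 2))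
    (ht : t ∈ Set.Ioo (0 : ℝ) (1 / 2)) (hrst : t < r + s - 1 / 2) :
    ∃ C : ℝ, 0 < C ∧ ∀ k : ℤ,
      ∑' l : ℤ, ((1 : ℝ) + (l : ℝ) ^ 2) ^ (-r) * ((1 : ℝ) + ((k : ℝ) - (l : ℝ)) ^ 2) ^ (-s) ≤
        C * ((1 : ℝ) + (k : ℝ) ^ 2) ^ (-t) := by
  obtain ⟨hr0, hr2⟩ := hr
  obtain ⟨hs0, hs2⟩ := hs
  obtain ⟨ht0, ht2⟩ := ht
  have htr : t < r := by linarith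
  have hts : t < s := by linarith
  obtain ⟨B1, hB1, hB1k⟩ := conv_bound (α := r - t) (β := s)
    (by linarith) (by linarith) hs0 hs2 (by linarith)
  obtain ⟨B2, hB2, hB2k⟩ := conv_bound (α := r) (β := s - t)
    hr0 hr2 (by linarith) (by linarith) (by linarith)
  refine ⟨(4 : ℝ) ^ t * (B1 + B2), by positivity, fun k => ?_⟩
  obtain ⟨hS1, hT1⟩ := hB1k k
  obtain ⟨hS2, hT2⟩ := hB2k k
  set K : ℝ := 1 + (k : ℝ) ^ 2 with hK
  have hK0 : 0 < K := by positivity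
  have hKt : 0 < K ^ (-t) := Real.rpow_pos_of_pos hK0 _
  -- pointwise bound
  have key : ∀ l : ℤ, ((1 : ℝ) + (l : ℝ) ^ 2) ^ (-r) *
      ((1 : ℝ) + ((k : ℝ) - (l : ℝ)) ^ 2) ^ (-s) ≤
      (4 : ℝ) ^ t * K ^ (-t) *
      (((1 : ℝ) + (l : ℝ) ^ 2) ^ (-(r - t)) * ((1 : ℝ) + ((k : ℝ) - (l : ℝ)) ^ 2) ^ (-s) +
       ((1 : ℝ) + (l : ℝ) ^ 2) ^ (-r) * ((1 : ℝ) + ((k : ℝ) - (l : ℝ)) ^ 2) ^ (-(s - t))) := by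
    intro l
    set a : ℝ := 1 + (l : ℝ) ^ 2 with ha
    set b : ℝ := 1 + ((k : ℝ) - (l : ℝ)) ^ 2 with hb
    have ha0 : 0 < a := by positivity
    have hb0 : 0 < b := by positivity
    have hmax : K ≤ 4 * a ∨ K ≤ 4 * b := by
      rcases le_total a b with h | h
      · right; rw [hK, ha, hb] at *; nlinarith [sq_nonneg ((l:ℝ) - ((k:ℝ) - (l:ℝ)))]
      · left; rw [hK, ha, hb] at *; nlinarith [sq_nonneg ((l:ℝ) - ((k:ℝ) - (l:ℝ)))]
    have h4t : ∀ x : ℝ, 0 < x → K ≤ 4 * x → x ^ (-t) ≤ (4:ℝ) ^ t * K ^ (-t) := by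
      intro x hx hKx
      have h1 : K / 4 ≤ x := by linarith
      have h2 : x ^ (-t) ≤ (K / 4) ^ (-t) :=
        Real.rpow_le_rpow_of_nonpos (by linarith) h1 (by linarith)
      have h3 : (K / 4) ^ (-t) = (4:ℝ) ^ t * K ^ (-t) := by
        rw [Real.div_rpow hK0.le (by norm_num), Real.rpow_neg (by norm_num : (0:ℝ) ≤ 4),
          div_eq_mul_inv, inv_inv, mul_comm]
      linarith [h2, h3.le, h3.ge]
    have hbs : (0:ℝ) ≤ b ^ (-s) := Real.rpow_nonneg hb0.le _
    have har : (0:ℝ) ≤ a ^ (-r) := Real.rpow_nonneg ha0.le _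
    have hg1 : (0:ℝ) ≤ a ^ (-(r - t)) * b ^ (-s) :=
      mul_nonneg (Real.rpow_nonneg ha0.le _) hbs
    have hg2 : (0:ℝ) ≤ a ^ (-r) * b ^ (-(s - t)) :=
      mul_nonneg har (Real.rpow_nonneg hb0.le _)
    rcases hmax with h | h
    · have hsplit : a ^ (-r) = a ^ (-t) * a ^ (-(r - t)) := by
        rw [← Real.rpow_add ha0]; ring_nf
      have hat := h4t a ha0 h
      calc a ^ (-r) * b ^ (-s) = a ^ (-t) * (a ^ (-(r - t)) * b ^ (-s)) := by
              rw [hsplit]; ring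
        _ ≤ (4:ℝ) ^ t * K ^ (-t) * (a ^ (-(r - t)) * b ^ (-s)) := by
              apply mul_le_mul_of_nonneg_right hat hg1
        _ ≤ (4:ℝ) ^ t * K ^ (-t) * (a ^ (-(r - t)) * b ^ (-s) + a ^ (-r) * b ^ (-(s - t))) := by
              apply mul_le_mul_of_nonneg_left _ (by positivity)
              linarith
    · have hsplit : b ^ (-s) = b ^ (-t) * b ^ (-(s - t)) := by
        rw [← Real.rpow_add hb0]; ring_nf
      have hbt := h4t b hb0 h
      calc a ^ (-r) * b ^ (-s) = b ^ (-t) * (a ^ (-r) * b ^ (-(s - t))) := by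
              rw [hsplit]; ring
        _ ≤ (4:ℝ) ^ t * K ^ (-t) * (a ^ (-r) * b ^ (-(s - t))) := by
              apply mul_le_mul_of_nonneg_right hbt hg2
        _ ≤ (4:ℝ) ^ t * K ^ (-t) * (a ^ (-(r - t)) * b ^ (-s) + a ^ (-r) * b ^ (-(s - t))) := by
              apply mul_le_mul_of_nonneg_left _ (by positivity)
              linarith
  have hgS : Summable (fun l : ℤ => (4 : ℝ) ^ t * K ^ (-t) *
      (((1 : ℝ) + (l : ℝ) ^ 2) ^ (-(r - t)) * ((1 : ℝ) + ((k : ℝ) - (l : ℝ)) ^ 2) ^ (-s) +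
       ((1 : ℝ) + (l : ℝ) ^ 2) ^ (-r) * ((1 : ℝ) + ((k : ℝ) - (l : ℝ)) ^ 2) ^ (-(s - t)))) :=
    (hS1.add hS2).mul_left _
  have hfS : Summable (fun l : ℤ => ((1 : ℝ) + (l : ℝ) ^ 2) ^ (-r) *
      ((1 : ℝ) + ((k : ℝ) - (l : ℝ)) ^ 2) ^ (-s)) :=
    Summable.of_nonneg_of_le
      (fun l => mul_nonneg (Real.rpow_nonneg (by positivity) _)
        (Real.rpow_nonneg (by positivity) _)) key hgS
  have h1 := Summable.tsum_le_tsum key hfS hgS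
  have h2 : (∑' l : ℤ, (4 : ℝ) ^ t * K ^ (-t) *
      (((1 : ℝ) + (l : ℝ) ^ 2) ^ (-(r - t)) * ((1 : ℝ) + ((k : ℝ) - (l : ℝ)) ^ 2) ^ (-s) +
       ((1 : ℝ) + (l : ℝ) ^ 2) ^ (-r) * ((1 : ℝ) + ((k : ℝ) - (l : ℝ)) ^ 2) ^ (-(s - t)))) =
      (4 : ℝ) ^ t * K ^ (-t) *
      ((∑' l : ℤ, ((1 : ℝ) + (l : ℝ) ^ 2) ^ (-(r - t)) *
          ((1 : ℝ) + ((k : ℝ) - (l : ℝ)) ^ 2) ^ (-s)) +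
       (∑' l : ℤ, ((1 : ℝ) + (l : ℝ) ^ 2) ^ (-r) *
          ((1 : ℝ) + ((k : ℝ) - (l : ℝ)) ^ 2) ^ (-(s - t)))) := by
    rw [tsum_mul_left, Summable.tsum_add hS1 hS2]
  have h3 : (4 : ℝ) ^ t * K ^ (-t) *
      ((∑' l : ℤ, ((1 : ℝ) + (l : ℝ) ^ 2) ^ (-(r - t)) *
          ((1 : ℝ) + ((k : ℝ) - (l : ℝ)) ^ 2) ^ (-s)) +
       (∑' l : ℤ, ((1 : ℝ) + (l : ℝ) ^ 2) ^ (-r) *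
          ((1 : ℝ) + ((k : ℝ) - (l : ℝ)) ^ 2) ^ (-(s - t)))) ≤
      (4 : ℝ) ^ t * K ^ (-t) * (B1 + B2) := by
    apply mul_le_mul_of_nonneg_left _ (by positivity)
    linarith
  calc ∑' l : ℤ, ((1 : ℝ) + (l : ℝ) ^ 2) ^ (-r) *
        ((1 : ℝ) + ((k : ℝ) - (l : ℝ)) ^ 2) ^ (-s) ≤ _ := h1
    _ = _ := h2
    _ ≤ (4 : ℝ) ^ t * K ^ (-t) * (B1 + B2) := h3
    _ = (4 : ℝ) ^ t * (B1 + B2) * K ^ (-t) := by ring
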